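/- Let M, N be positive integers and let A be a nonzero real M×N matrix. Then there exist unit vectors u ∈ ℝ^M and v ∈ ℝ^N such that the rank-at-most-one matrix B = ‖A‖₂ • u vᵀ satisfies ‖A − B‖_F² = ‖A‖_F² − ‖A‖₂². Consequently the minimum of ‖A − B‖_F over matrices B of rank at most one equals √(‖A‖_F² − ‖A‖₂²). -/

import Mathlib

/-- The Frobenius norm of a real M×N matrix. -/
noncomputable def frobNorm {M N : ℕ} (A : Matrix (Fin M) (Fin N) ℝ) : ℝ :=
  Real.sqrt (∑ i : Fin M, ∑ j : Fin N, (A i j) ^ 2)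

/-- The spectral norm (ℓ²→ℓ² operator norm) of a real M×N matrix:
the supremum of `‖A v‖₂` over unit vectors `v`. -/
noncomputable def specNorm {M N : ℕ} (A : Matrix (Fin M) (Fin N) ℝ) : ℝ :=
  sSup {r : ℝ | ∃ v : Fin N → ℝ, Real.sqrt (∑ j : Fin N, (v j) ^ 2) = 1 ∧
    r = Real.sqrt (∑ i : Fin M, (A.mulVec v i) ^ 2)}

open Finset

namespace Stmt7Aux

variable {M N : ℕ}

lemma sumsq_nonneg {n : ℕ} (v : Fin n → ℝ) : 0 ≤ ∑ j, v j ^ 2 :=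
  Finset.sum_nonneg fun _ _ => sq_nonneg _

/-- the spectral set -/
def SA (A : Matrix (Fin M) (Fin N) ℝ) : Set ℝ :=
  {r : ℝ | ∃ v : Fin N → ℝ, Real.sqrt (∑ j : Fin N, (v j) ^ 2) = 1 ∧
    r = Real.sqrt (∑ i : Fin M, (A.mulVec v i) ^ 2)}

lemma cont_g : Continuous fun v : Fin N → ℝ => Real.sqrt (∑ j, v j ^ 2) := by
  apply Real.continuous_sqrt.comp
  exact continuous_finset_sum _ fun j _ => (continuous_apply j).pow 2

lemma cont_f (A : Matrix (Fin M) (Fin N) ℝ) :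
    Continuous fun v : Fin N → ℝ => Real.sqrt (∑ i, (A.mulVec v i) ^ 2) := by
  apply Real.continuous_sqrt.comp
  apply continuous_finset_sum _ fun i _ => ?_
  have : Continuous fun v : Fin N → ℝ => A.mulVec v i := by
    simp only [Matrix.mulVec, dotProduct]
    exact continuous_finset_sum _ fun j _ => continuous_const.mul (continuous_apply j)
  exact this.pow 2

lemma sphere_compact : IsCompact {v : Fin N → ℝ | Real.sqrt (∑ j, v j ^ 2) = 1} := by
  rw [Metric.isCompact_iff_isClosed_bounded]
  constructor
  · exact isClosed_eq cont_g continuous_const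
  · rw [isBounded_iff_forall_norm_le]
    refine ⟨1, fun v hv => ?_⟩
    rw [pi_norm_le_iff_of_nonneg zero_le_one]
    intro j
    have hsum : (∑ j, v j ^ 2) = 1 := by
      have := Real.sq_sqrt (sumsq_nonneg v)
      rw [hv] at this; linarith
    have h1 : v j ^ 2 ≤ 1 := by
      rw [← hsum]
      exact Finset.single_le_sum (fun k _ => sq_nonneg (v k)) (mem_univ j)
    calc ‖v j‖ = Real.sqrt (v j ^ 2) := by rw [Real.sqrt_sq_eq_abs]; rfl
    _ ≤ Real.sqrt 1 := Real.sqrt_le_sqrt h1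
    _ = 1 := Real.sqrt_one

lemma SA_compact (A : Matrix (Fin M) (Fin N) ℝ) : IsCompact (SA A) := by
  have : SA A = (fun v : Fin N → ℝ => Real.sqrt (∑ i, (A.mulVec v i) ^ 2)) ''
      {v : Fin N → ℝ | Real.sqrt (∑ j, v j ^ 2) = 1} := by
    ext r
    constructor
    · rintro ⟨v, hv, rfl⟩; exact ⟨v, hv, rfl⟩
    · rintro ⟨v, hv, rfl⟩; exact ⟨v, hv, rfl⟩
  rw [this]
  exact sphere_compact.image (cont_f A)

lemma SA_nonempty (hN : 0 < N) (A : Matrix (Fin M) (Fin N) ℝ) : (SA A).Nonempty := by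
  classical
  set v0 : Fin N → ℝ := fun j => if j = ⟨0, hN⟩ then 1 else 0 with hv0
  have h1 : Real.sqrt (∑ j, v0 j ^ 2) = 1 := by
    have : (∑ j, v0 j ^ 2) = 1 := by
      rw [hv0, Finset.sum_eq_single (⟨0, hN⟩ : Fin N)]
      · simp
      · intro b _ hb; simp [hb]
      · simp
    rw [this, Real.sqrt_one]
  exact ⟨_, v0, h1, rfl⟩

lemma spec_mem (hN : 0 < N) (A : Matrix (Fin M) (Fin N) ℝ) : specNorm A ∈ SA A :=
  (SA_compact A).sSup_mem (SA_nonempty hN A)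

lemma spec_ub (A : Matrix (Fin M) (Fin N) ℝ) {r : ℝ} (hr : r ∈ SA A) : r ≤ specNorm A :=
  le_csSup (SA_compact A).bddAbove hr

lemma spec_ub' (A : Matrix (Fin M) (Fin N) ℝ) (v : Fin N → ℝ)
    (hv : Real.sqrt (∑ j, v j ^ 2) = 1) :
    Real.sqrt (∑ i, (A.mulVec v i) ^ 2) ≤ specNorm A :=
  spec_ub A ⟨v, hv, rfl⟩

lemma spec_nonneg (hN : 0 < N) (A : Matrix (Fin M) (Fin N) ℝ) : 0 ≤ specNorm A := by
  obtain ⟨v, hv, h⟩ := spec_mem hN A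
  rw [h]; exact Real.sqrt_nonneg _

lemma norm_mulVec_le (A : Matrix (Fin M) (Fin N) ℝ) (v : Fin N → ℝ) :
    Real.sqrt (∑ i, (A.mulVec v i) ^ 2) ≤ specNorm A * Real.sqrt (∑ j, v j ^ 2) := by
  by_cases hv : (∑ j, v j ^ 2) = 0
  · have hv0 : v = 0 := by
      funext j
      have := (Finset.sum_eq_zero_iff_of_nonneg (fun k _ => sq_nonneg (v k))).1 hv j (mem_univ j)
      exact pow_eq_zero_iff two_ne_zero |>.mp this
    simp [hv0, Matrix.mulVec_zero]
  · have hpos : 0 < ∑ j, v j ^ 2 := lt_of_le_of_ne (sumsq_nonneg v) (Ne.symm hv)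
    set c := Real.sqrt (∑ j, v j ^ 2) with hc
    have hcpos : 0 < c := Real.sqrt_pos.2 hpos
    have hunit : Real.sqrt (∑ j, (c⁻¹ • v) j ^ 2) = 1 := by
      have h1 : (∑ j, (c⁻¹ • v) j ^ 2) = c⁻¹ ^ 2 * ∑ j, v j ^ 2 := by
        simp [mul_pow, Finset.mul_sum]
      rw [h1, Real.sqrt_mul (sq_nonneg _), Real.sqrt_sq (inv_nonneg.2 hcpos.le), ← hc]
      field_simp
    have hle := spec_ub' A (c⁻¹ • v) hunit
    have h2 : Real.sqrt (∑ i, (A.mulVec (c⁻¹ • v) i) ^ 2)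
        = c⁻¹ * Real.sqrt (∑ i, (A.mulVec v i) ^ 2) := by
      rw [Matrix.mulVec_smul]
      have h3 : (∑ i, (c⁻¹ • A.mulVec v) i ^ 2) = c⁻¹ ^ 2 * ∑ i, (A.mulVec v i) ^ 2 := by
        simp [mul_pow, Finset.mul_sum]
      rw [h3, Real.sqrt_mul (sq_nonneg _), Real.sqrt_sq (inv_nonneg.2 hcpos.le)]
    rw [h2] at hle
    calc Real.sqrt (∑ i, (A.mulVec v i) ^ 2)
        = c * (c⁻¹ * Real.sqrt (∑ i, (A.mulVec v i) ^ 2)) := by field_simp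
      _ ≤ c * specNorm A := mul_le_mul_of_nonneg_left hle hcpos.le
      _ = specNorm A * c := mul_comm _ _

lemma bilinear_bound (A : Matrix (Fin M) (Fin N) ℝ) (x : Fin M → ℝ) (y : Fin N → ℝ) :
    (∑ i, x i * A.mulVec y i) ≤
      specNorm A * (Real.sqrt (∑ i, x i ^ 2) * Real.sqrt (∑ j, y j ^ 2)) := by
  have cs : (∑ i, x i * A.mulVec y i) ^ 2 ≤
      (∑ i, x i ^ 2) * (∑ i, (A.mulVec y i) ^ 2) :=
    Finset.sum_mul_sq_le_sq_mul_sq _ _ _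
  have h1 : (∑ i, x i * A.mulVec y i) ≤
      Real.sqrt (∑ i, x i ^ 2) * Real.sqrt (∑ i, (A.mulVec y i) ^ 2) := by
    calc (∑ i, x i * A.mulVec y i) ≤ |∑ i, x i * A.mulVec y i| := le_abs_self _
      _ = Real.sqrt ((∑ i, x i * A.mulVec y i) ^ 2) := (Real.sqrt_sq_eq_abs _).symm
      _ ≤ Real.sqrt ((∑ i, x i ^ 2) * (∑ i, (A.mulVec y i) ^ 2)) := Real.sqrt_le_sqrt cs
      _ = _ := Real.sqrt_mul (sumsq_nonneg x) _
  calc (∑ i, x i * A.mulVec y i)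
      ≤ Real.sqrt (∑ i, x i ^ 2) * Real.sqrt (∑ i, (A.mulVec y i) ^ 2) := h1
    _ ≤ Real.sqrt (∑ i, x i ^ 2) * (specNorm A * Real.sqrt (∑ j, y j ^ 2)) :=
        mul_le_mul_of_nonneg_left (norm_mulVec_le A y) (Real.sqrt_nonneg _)
    _ = _ := by ring

lemma frob_expand (A : Matrix (Fin M) (Fin N) ℝ) (x : Fin M → ℝ) (y : Fin N → ℝ) :
    (∑ i, ∑ j, (A i j - x i * y j) ^ 2)
      = (∑ i, ∑ j, A i j ^ 2) - 2 * (∑ i, x i * A.mulVec y i)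
        + (∑ i, x i ^ 2) * (∑ j, y j ^ 2) := by
  have h : ∀ i, (∑ j, (A i j - x i * y j) ^ 2)
      = (∑ j, A i j ^ 2) - 2 * (x i * A.mulVec y i) + x i ^ 2 * (∑ j, y j ^ 2) := by
    intro i
    simp only [Matrix.mulVec, dotProduct, Finset.mul_sum]
    rw [← Finset.sum_sub_distrib, ← Finset.sum_add_distrib]
    exact Finset.sum_congr rfl fun j _ => by ring
  simp only [h]
  rw [Finset.sum_add_distrib, Finset.sum_sub_distrib, ← Finset.mul_sum, ← Finset.sum_mul]

lemma rank_vmv_le (u : Fin M → ℝ) (v : Fin N → ℝ) : (Matrix.vecMulVec u v).rank ≤ 1 := by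
  rw [Matrix.vecMulVec_eq (Fin 1)]
  refine le_trans (Matrix.rank_mul_le_left _ _) ?_
  refine le_trans (Matrix.rank_le_card_width _) ?_
  simp

lemma exists_decomp (B : Matrix (Fin M) (Fin N) ℝ) (hB : B.rank ≤ 1) :
    ∃ x y, B = Matrix.vecMulVec x y := by
  classical
  have hprin : (LinearMap.range B.mulVecLin).IsPrincipal :=
    (Submodule.finrank_le_one_iff_isPrincipal _).1 hB
  obtain ⟨x, hx⟩ := hprin.principal
  have hcol : ∀ j, ∃ c : ℝ, B.mulVec (Pi.single j 1) = c • x := by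
    intro j
    have hmem : B.mulVec (Pi.single j 1) ∈ LinearMap.range B.mulVecLin :=
      ⟨Pi.single j 1, rfl⟩
    rw [hx, Submodule.mem_span_singleton] at hmem
    obtain ⟨c, hc⟩ := hmem
    exact ⟨c, hc.symm⟩
  choose y hy using hcol
  refine ⟨x, y, ?_⟩
  ext i j
  have h := congrFun (hy j) i
  rw [Matrix.mulVec_single] at h
  simp only [Pi.smul_apply, smul_eq_mul, mul_one, MulOpposite.op_one, one_smul, Matrix.col_apply] at h
  rw [Matrix.vecMulVec_apply, h, mul_comm]

lemma frob_sq (C : Matrix (Fin M) (Fin N) ℝ) :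
    frobNorm C ^ 2 = ∑ i, ∑ j, C i j ^ 2 :=
  Real.sq_sqrt (Finset.sum_nonneg fun i _ => sumsq_nonneg _)

lemma frob_nonneg (C : Matrix (Fin M) (Fin N) ℝ) : 0 ≤ frobNorm C :=
  Real.sqrt_nonneg _

end Stmt7Aux

open Stmt7Aux in
/-- For a nonzero matrix A there are unit vectors u, v with
`B = ‖A‖₂ • u vᵀ` attaining `‖A − B‖_F² = ‖A‖_F² − ‖A‖₂²`; consequently the
minimum of `‖A − B‖_F` over rank-at-most-one matrices B is
`√(‖A‖_F² − ‖A‖₂²)`. -/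
theorem stmt_7 (M N : ℕ) (hM : 0 < M) (hN : 0 < N)
    (A : Matrix (Fin M) (Fin N) ℝ) (hA : A ≠ 0) :
    (∃ (u : Fin M → ℝ) (v : Fin N → ℝ),
      Real.sqrt (∑ i : Fin M, (u i) ^ 2) = 1 ∧
      Real.sqrt (∑ j : Fin N, (v j) ^ 2) = 1 ∧
      (Matrix.vecMulVec u v).rank ≤ 1 ∧
      (frobNorm (A - specNorm A • Matrix.vecMulVec u v)) ^ 2 =
        (frobNorm A) ^ 2 - (specNorm A) ^ 2) ∧
    IsLeast {r : ℝ | ∃ B : Matrix (Fin M) (Fin N) ℝ, B.rank ≤ 1 ∧ r = frobNorm (A - B)}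
      (Real.sqrt ((frobNorm A) ^ 2 - (specNorm A) ^ 2)) := by
  classical
  have hσ0 : 0 ≤ specNorm A := spec_nonneg hN A
  obtain ⟨v, hv1, hvσ⟩ := spec_mem hN A
  set σ := specNorm A with hσdef
  -- σ is positive
  have hσpos : 0 < σ := by
    have hex : ∃ i j, A i j ≠ 0 := by
      by_contra h; push_neg at h
      exact hA (by ext i j; simpa using h i j)
    obtain ⟨i0, j0, hij⟩ := hex
    set v0 : Fin N → ℝ := fun j => if j = j0 then 1 else 0 with hv0def
    have hv0 : Real.sqrt (∑ j, v0 j ^ 2) = 1 := by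
      have h1 : (∑ j, v0 j ^ 2) = 1 := by
        rw [hv0def, Finset.sum_eq_single j0]
        · simp
        · intro b _ hb; simp [hb]
        · simp
      rw [h1, Real.sqrt_one]
    have hAv0 : A.mulVec v0 i0 = A i0 j0 := by
      simp only [Matrix.mulVec, dotProduct, hv0def, mul_ite, mul_one, mul_zero]
      rw [Finset.sum_ite_eq' Finset.univ j0 (fun j => A i0 j)]
      simp
    have hterm : 0 < (A.mulVec v0 i0) ^ 2 := by rw [hAv0]; positivity
    have hsumpos : 0 < ∑ i, (A.mulVec v0 i) ^ 2 :=
      lt_of_lt_of_le hterm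
        (Finset.single_le_sum (fun k _ => sq_nonneg (A.mulVec v0 k)) (Finset.mem_univ i0))
    exact lt_of_lt_of_le (Real.sqrt_pos.2 hsumpos) (spec_ub' A v0 hv0)
  have hSv : (∑ j, v j ^ 2) = 1 := by
    have h := Real.sq_sqrt (sumsq_nonneg v)
    rw [hv1] at h; linarith
  have hSAv : (∑ i, (A.mulVec v i) ^ 2) = σ ^ 2 := by
    rw [hvσ]
    exact (Real.sq_sqrt (sumsq_nonneg (A.mulVec v))).symm
  set u : Fin M → ℝ := σ⁻¹ • A.mulVec v with hu
  have hσu : ∀ i, σ * u i = A.mulVec v i := by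
    intro i
    rw [hu]
    simp only [Pi.smul_apply, smul_eq_mul]
    field_simp
  have hu1 : Real.sqrt (∑ i, u i ^ 2) = 1 := by
    have h1 : (∑ i, u i ^ 2) = σ⁻¹ ^ 2 * σ ^ 2 := by
      rw [hu]
      simp only [Pi.smul_apply, smul_eq_mul, mul_pow]
      rw [← Finset.mul_sum, hSAv]
    rw [h1]
    have : σ⁻¹ ^ 2 * σ ^ 2 = 1 := by field_simp
    rw [this, Real.sqrt_one]
  -- key equality
  have key : frobNorm (A - σ • Matrix.vecMulVec u v) ^ 2 = frobNorm A ^ 2 - σ ^ 2 := by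
    rw [frob_sq, frob_sq]
    have hent : ∀ i j, (A - σ • Matrix.vecMulVec u v) i j
        = A i j - (A.mulVec v) i * v j := by
      intro i j
      simp only [Matrix.sub_apply, Matrix.smul_apply, Matrix.vecMulVec_apply, smul_eq_mul]
      rw [← hσu i]; ring_nf
    calc (∑ i, ∑ j, (A - σ • Matrix.vecMulVec u v) i j ^ 2)
        = ∑ i, ∑ j, (A i j - (A.mulVec v) i * v j) ^ 2 := by
          exact Finset.sum_congr rfl fun i _ => Finset.sum_congr rfl fun j _ => by rw [hent]
      _ = (∑ i, ∑ j, A i j ^ 2) - 2 * (∑ i, (A.mulVec v) i * A.mulVec v i)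
          + (∑ i, (A.mulVec v) i ^ 2) * (∑ j, v j ^ 2) := frob_expand A (A.mulVec v) v
      _ = (∑ i, ∑ j, A i j ^ 2) - σ ^ 2 := by
          have h2 : (∑ i, (A.mulVec v) i * A.mulVec v i) = ∑ i, (A.mulVec v i) ^ 2 :=
            Finset.sum_congr rfl fun i _ => (sq (A.mulVec v i)).symm
          rw [h2, hSAv, hSv]; ring
  -- lower bound
  have lower : ∀ B : Matrix (Fin M) (Fin N) ℝ, B.rank ≤ 1 →
      frobNorm A ^ 2 - σ ^ 2 ≤ frobNorm (A - B) ^ 2 := by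
    intro B hB
    obtain ⟨x, y, rfl⟩ := exists_decomp B hB
    rw [frob_sq, frob_sq]
    have hent2 : ∀ i j, (A - Matrix.vecMulVec x y) i j = A i j - x i * y j := by
      intro i j; simp [Matrix.sub_apply, Matrix.vecMulVec_apply]
    have hexp : (∑ i, ∑ j, (A - Matrix.vecMulVec x y) i j ^ 2)
        = (∑ i, ∑ j, A i j ^ 2) - 2 * (∑ i, x i * A.mulVec y i)
          + (∑ i, x i ^ 2) * (∑ j, y j ^ 2) := by
      rw [← frob_expand A x y]
      exact Finset.sum_congr rfl fun i _ => Finset.sum_congr rfl fun j _ => by rw [hent2]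
    rw [hexp]
    have hS := bilinear_bound A x y
    have hX : (∑ i, x i ^ 2) = Real.sqrt (∑ i, x i ^ 2) ^ 2 :=
      (Real.sq_sqrt (sumsq_nonneg x)).symm
    have hY : (∑ j, y j ^ 2) = Real.sqrt (∑ j, y j ^ 2) ^ 2 :=
      (Real.sq_sqrt (sumsq_nonneg y)).symm
    nlinarith [sq_nonneg (Real.sqrt (∑ i, x i ^ 2) * Real.sqrt (∑ j, y j ^ 2) - σ),
      Real.sqrt_nonneg (∑ i, x i ^ 2), Real.sqrt_nonneg (∑ j, y j ^ 2)]
  have hfrobval : frobNorm (A - σ • Matrix.vecMulVec u v)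
      = Real.sqrt (frobNorm A ^ 2 - σ ^ 2) := by
    rw [← key, Real.sqrt_sq (frob_nonneg _)]
  refine ⟨⟨u, v, hu1, hv1, rank_vmv_le u v, key⟩, ?_, ?_⟩
  · refine ⟨σ • Matrix.vecMulVec u v, ?_, hfrobval.symm⟩
    have h : σ • Matrix.vecMulVec u v = Matrix.vecMulVec (σ • u) v := by
      ext i j
      simp only [Matrix.smul_apply, Matrix.vecMulVec_apply, Pi.smul_apply, smul_eq_mul]
      ring
    rw [h]; exact rank_vmv_le _ _
  · rintro r ⟨B, hB, rfl⟩
    calc Real.sqrt (frobNorm A ^ 2 - σ ^ 2)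
        ≤ Real.sqrt (frobNorm (A - B) ^ 2) := Real.sqrt_le_sqrt (lower B hB)
      _ = frobNorm (A - B) := Real.sqrt_sq (frob_nonneg _)
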